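/- For every integer m ≥ 12, the ratio R(2) = (m+1)^{(m+1)/2} · Γ(m/2) · e^{−1} / (m^{m/2} · Γ((m+1)/2)) is strictly less than 1, where Γ denotes the Gamma function. (R(2) is the value at t = 2 of the ratio g_{m+1}(t)/g_m(t) of the densities of the sample means of m+1 and of m independent chi-square(1) random variables.) -/

import Mathlib

open Real

lemma gamma_mid (x : ℝ) (hx : 0 < x) :
    Gamma (x + 1/2) ^ 2 ≤ Gamma x * Gamma (x + 1) := by
  have h := Real.convexOn_log_Gamma.2 (Set.mem_Ioi.mpr hx)
    (Set.mem_Ioi.mpr (by linarith : (0:ℝ) < x + 1))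
    (by norm_num : (0:ℝ) ≤ (1/2:ℝ)) (by norm_num : (0:ℝ) ≤ (1/2:ℝ)) (by norm_num)
  have hmid : (1/2 : ℝ) • x + (1/2 : ℝ) • (x + 1) = x + 1/2 := by simp [smul_eq_mul]; ring
  rw [hmid] at h
  simp only [Function.comp_apply, smul_eq_mul] at h
  have h1 : 0 < Gamma (x + 1/2) := Gamma_pos_of_pos (by linarith)
  have h2 : 0 < Gamma x := Gamma_pos_of_pos hx
  have h3 : 0 < Gamma (x + 1) := Gamma_pos_of_pos (by linarith)
  have := Real.exp_le_exp.mpr (by linarith : 2 * log (Gamma (x+1/2)) ≤ log (Gamma x) + log (Gamma (x+1)))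
  rw [Real.exp_add, Real.exp_log h2, Real.exp_log h3, mul_comm (2:ℝ), Real.exp_mul, Real.exp_log h1] at this
  calc Gamma (x + 1/2) ^ 2 = Gamma (x+1/2) ^ (2:ℝ) := by
        rw [← Real.rpow_natCast]; norm_num
    _ ≤ _ := this

lemma density_key (M : ℝ) (hM : (12:ℝ) ≤ M) :
    (M + 1) ^ ((M + 1) / 2) * Real.Gamma (M / 2) * Real.exp (-1) /
      (M ^ (M / 2) * Real.Gamma ((M + 1) / 2)) < 1 := by
  have hM0 : (0:ℝ) < M := by linarith
  set y : ℝ := (M-1)/2 with hydef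
  have hy : (0:ℝ) < y := by rw [hydef]; linarith
  have hGy : 0 < Gamma y := Gamma_pos_of_pos hy
  have hG1 : 0 < Gamma (M/2) := Gamma_pos_of_pos (by linarith)
  have hG2 : 0 < Gamma ((M+1)/2) := Gamma_pos_of_pos (by positivity)
  have hrec : Gamma ((M+1)/2) = y * Gamma y := by
    have h : (M+1)/2 = y + 1 := by rw [hydef]; ring
    rw [h, Real.Gamma_add_one (ne_of_gt hy)]
  -- Gamma bound : Gamma (M/2) ≤ sqrt y * Gamma y
  have hGbound : Gamma (M/2) ≤ Real.sqrt y * Gamma y := by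
    have hmid := gamma_mid y hy
    have hx : y + 1/2 = M/2 := by rw [hydef]; ring
    rw [hx, Real.Gamma_add_one (ne_of_gt hy)] at hmid
    have h2 : Gamma (M/2) ^ 2 ≤ (Real.sqrt y * Gamma y) ^ 2 := by
      rw [mul_pow, Real.sq_sqrt hy.le]; nlinarith
    calc Gamma (M/2) = Real.sqrt (Gamma (M/2) ^ 2) := (Real.sqrt_sq hG1.le).symm
      _ ≤ Real.sqrt ((Real.sqrt y * Gamma y) ^ 2) := Real.sqrt_le_sqrt h2
      _ = Real.sqrt y * Gamma y := Real.sqrt_sq (by positivity)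
  -- split the power
  have hsplit : (M+1) ^ ((M+1)/2) = M ^ (M/2) * M ^ ((1:ℝ)/2) * ((M+1)/M) ^ ((M+1)/2) := by
    have hEq : M * ((M+1)/M) = M + 1 := by field_simp
    nth_rewrite 1 [← hEq]
    rw [Real.mul_rpow hM0.le (by positivity), show (M+1)/2 = M/2 + 1/2 by ring,
      Real.rpow_add hM0]
  -- bound the ratio power
  have hA : ((M+1)/M) ^ ((M+1)/2) ≤ Real.exp (13/24) := by
    rw [Real.rpow_def_of_pos (by positivity)]
    apply Real.exp_le_exp.mpr
    have hlog : Real.log ((M+1)/M) ≤ 1/M := by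
      have h1 := Real.log_le_sub_one_of_pos (show (0:ℝ) < (M+1)/M by positivity)
      have h2 : (M+1)/M - 1 = 1/M := by field_simp; ring
      linarith
    have hlognn : 0 ≤ Real.log ((M+1)/M) := by
      apply Real.log_nonneg; rw [le_div_iff₀ hM0]; linarith
    have h3 : Real.log ((M+1)/M) * ((M+1)/2) ≤ (1/M) * ((M+1)/2) :=
      mul_le_mul_of_nonneg_right hlog (by linarith)
    have h4 : (1/M) * ((M+1)/2) ≤ 13/24 := by
      rw [div_mul_div_comm, div_le_div_iff₀ (by linarith) (by norm_num)]
      nlinarith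
    linarith
  -- numeric core
  have hexp : (24/11 : ℝ) < Real.exp (11/12) := by
    have h1 : (2.7182818283 : ℝ) < Real.exp 1 := Real.exp_one_gt_d9
    have h2 : (1:ℝ) + (-1/12) ≤ Real.exp (-1/12) := by
      linarith [Real.add_one_le_exp (-1/12 : ℝ)]
    have h3 : Real.exp (11/12) = Real.exp 1 * Real.exp (-1/12) := by
      rw [← Real.exp_add]; norm_num
    nlinarith [Real.exp_pos (-1/12 : ℝ)]
  have hexpneg : Real.exp (-11/12) < 11/24 := by
    have hprod : Real.exp (-11/12) * Real.exp (11/12) = 1 := by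
      rw [← Real.exp_add]; norm_num
    nlinarith [Real.exp_pos (-11/12 : ℝ)]
  have hnum : M ^ ((1:ℝ)/2) * Real.exp (13/24) * Real.sqrt y * Real.exp (-1) < y := by
    have hMs : M ^ ((1:ℝ)/2) = Real.sqrt M := by
      rw [Real.sqrt_eq_rpow]
    rw [hMs]
    have hcomb : Real.exp (13/24) * Real.exp (-1) = Real.exp (-(11/24)) := by
      rw [← Real.exp_add]; norm_num
    have hkey : Real.sqrt M * Real.exp (-(11/24)) < Real.sqrt y := by
      rw [show Real.sqrt M * Real.exp (-(11/24)) = Real.sqrt (M * Real.exp (-(11/24)) ^ 2) by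
        rw [Real.sqrt_mul hM0.le, Real.sqrt_sq (Real.exp_pos _).le]]
      apply Real.sqrt_lt_sqrt (by positivity)
      have h5 : Real.exp (-(11/24)) ^ 2 = Real.exp (-11/12) := by
        rw [sq, ← Real.exp_add]; norm_num
      rw [h5, hydef]
      nlinarith [Real.exp_pos (-11/12 : ℝ)]
    have hsq : Real.sqrt y * Real.sqrt y = y := Real.mul_self_sqrt hy.le
    calc Real.sqrt M * Real.exp (13/24) * Real.sqrt y * Real.exp (-1)
        = (Real.sqrt M * Real.exp (-(11/24))) * Real.sqrt y := by rw [← hcomb]; ring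
      _ < Real.sqrt y * Real.sqrt y := mul_lt_mul_of_pos_right hkey (Real.sqrt_pos.mpr hy)
      _ = y := hsq
  -- assemble
  rw [div_lt_one (by positivity), hsplit]
  have hc : (0:ℝ) ≤ M ^ (M/2) * M ^ ((1:ℝ)/2) := by positivity
  have hp1 : (0:ℝ) < M ^ (M/2) := Real.rpow_pos_of_pos hM0 _
  have h7 : ((M+1)/M) ^ ((M+1)/2) * Gamma (M/2) ≤ Real.exp (13/24) * (Real.sqrt y * Gamma y) :=
    mul_le_mul hA hGbound hG1.le (Real.exp_pos _).le
  calc M ^ (M/2) * M ^ ((1:ℝ)/2) * ((M+1)/M) ^ ((M+1)/2) * Gamma (M/2) * Real.exp (-1)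
      = (M ^ (M/2) * M ^ ((1:ℝ)/2)) * (((M+1)/M) ^ ((M+1)/2) * Gamma (M/2)) * Real.exp (-1) := by
        ring
    _ ≤ (M ^ (M/2) * M ^ ((1:ℝ)/2)) * (Real.exp (13/24) * (Real.sqrt y * Gamma y)) * Real.exp (-1) :=
        mul_le_mul_of_nonneg_right (mul_le_mul_of_nonneg_left h7 hc) (Real.exp_pos _).le
    _ = M ^ (M/2) * (M ^ ((1:ℝ)/2) * Real.exp (13/24) * Real.sqrt y * Real.exp (-1) * Gamma y) := by
        ring
    _ < M ^ (M/2) * (y * Gamma y) :=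
        mul_lt_mul_of_pos_left (mul_lt_mul_of_pos_right hnum hGy) hp1
    _ = M ^ (M/2) * Gamma ((M+1)/2) := by rw [hrec]

theorem density_ratio_at_two_lt_one (m : ℕ) (hm : 12 ≤ m) :
    ((m : ℝ) + 1) ^ (((m : ℝ) + 1) / 2) * Real.Gamma ((m : ℝ) / 2) *
        Real.exp (-1) /
      ((m : ℝ) ^ ((m : ℝ) / 2) * Real.Gamma (((m : ℝ) + 1) / 2)) < 1 := by
  exact density_key (m : ℝ) (by exact_mod_cast hm)
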